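/- Let n ≥ 1, let v ∈ ℝ^n, let α > 0 and 1 ≤ a ≤ n be such that |v_i| ≥ α for all i ∈ [a], and let x be uniformly distributed on {-1,1}^n. Then for every t ∈ ℝ, Pr[|⟨v,x⟩ - t| < α] ≤ binom(a, ⌊a/2⌋) / 2^a. In particular, Q(α, ⟨v,x⟩) ≤ binom(a, ⌊a/2⌋)/2^a = O(1/√a). -/

import Mathlib

open MeasureTheory

/-- The uniform measure on `{-1,1}^n ⊂ ℝ^n`: coordinates independent, each `±1` with
probability `1/2`. -/
noncomputable def uniformCube (n : ℕ) : Measure (Fin n → ℝ) :=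
  Measure.pi fun _ =>
    (2⁻¹ : ENNReal) • Measure.dirac (1 : ℝ) + (2⁻¹ : ENNReal) • Measure.dirac (-1 : ℝ)

open Finset
open scoped Classical


lemma cb_sq (m : ℕ) : (Nat.centralBinom m)^2 * (3*m+1) ≤ 16^m := by
  induction m with
  | zero => simp [Nat.centralBinom]
  | succ m ih =>
    have key : (Nat.centralBinom (m+1))^2 * (3*(m+1)+1) * ((m+1)^2 * (3*m+1)) ≤
        16^(m+1) * ((m+1)^2 * (3*m+1)) := by
      have h1 : (m+1) * Nat.centralBinom (m+1) = 2 * (2*m+1) * Nat.centralBinom m :=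
        Nat.succ_mul_centralBinom_succ m
      have h2 : ((m+1) * Nat.centralBinom (m+1))^2 = (2*(2*m+1))^2 * (Nat.centralBinom m)^2 := by
        rw [h1]; ring
      have h3 : (2*(2*m+1))^2 * (3*(m+1)+1) * (3*m+1) ≤ 16 * ((m+1)^2 * (3*m+1)) * (3*m+1) := by
        nlinarith [sq_nonneg m, m.zero_le]
      calc (Nat.centralBinom (m+1))^2 * (3*(m+1)+1) * ((m+1)^2 * (3*m+1))
          = ((m+1) * Nat.centralBinom (m+1))^2 * (3*(m+1)+1) * (3*m+1) := by ring
        _ = (Nat.centralBinom m)^2 * ((2*(2*m+1))^2 * (3*(m+1)+1) * (3*m+1)) := by rw [h2]; ring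
        _ ≤ (Nat.centralBinom m)^2 * (16 * ((m+1)^2 * (3*m+1)) * (3*m+1)) := by
            exact Nat.mul_le_mul_left _ h3
        _ = ((Nat.centralBinom m)^2 * (3*m+1)) * (16 * (m+1)^2 * (3*m+1)) := by ring
        _ ≤ 16^m * (16 * (m+1)^2 * (3*m+1)) := Nat.mul_le_mul_right _ ih
        _ = 16^(m+1) * ((m+1)^2 * (3*m+1)) := by ring
    have hpos : 0 < (m+1)^2 * (3*m+1) := by positivity
    exact Nat.le_of_mul_le_mul_right key hpos

lemma choose_sq (a : ℕ) : (a.choose (a/2))^2 * a ≤ 4^a := by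
  rcases Nat.even_or_odd a with ⟨m, hm⟩ | ⟨m, hm⟩
  · subst hm
    have h2 : (m+m)/2 = m := by omega
    rw [h2]
    have h := cb_sq m
    have h3 : (Nat.choose (m+m) m)^2 * (m+m) ≤ (Nat.centralBinom m)^2 * (3*m+1) := by
      rw [Nat.centralBinom, two_mul]
      exact Nat.mul_le_mul_left _ (by omega)
    calc (Nat.choose (m+m) m)^2 * (m+m) ≤ 16^m := le_trans h3 h
      _ = 4^(m+m) := by rw [← two_mul, pow_mul]; norm_num
  · subst hm
    have hdiv : (2*m+1)/2 = m := by omega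
    rw [hdiv]
    have hkey : 2 * Nat.choose (2*m+1) m = Nat.centralBinom (m+1) := by
      rw [Nat.centralBinom]
      have h1 : Nat.choose (2*m+1) (m+1) = Nat.choose (2*m+1) m := Nat.choose_symm_half m
      have h2 : Nat.choose (2*(m+1)) (m+1) = Nat.choose (2*m+1) m + Nat.choose (2*m+1) (m+1) := by
        have : 2*(m+1) = (2*m+1) + 1 := by ring
        rw [this, Nat.choose_succ_succ' (2*m+1) m]
      omega
    have hfin : (2 * Nat.choose (2*m+1) m)^2 * (2*m+1) ≤ (Nat.centralBinom (m+1))^2 * (3*(m+1)+1) := by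
      rw [hkey]; exact Nat.mul_le_mul_left _ (by omega)
    have h := cb_sq (m+1)
    have : (Nat.choose (2*m+1) m)^2 * (2*m+1) * 4 ≤ 16^(m+1) := by
      calc (Nat.choose (2*m+1) m)^2 * (2*m+1) * 4 = (2 * Nat.choose (2*m+1) m)^2 * (2*m+1) := by ring
        _ ≤ (Nat.centralBinom (m+1))^2 * (3*(m+1)+1) := hfin
        _ ≤ 16^(m+1) := h
    have h16 : (16:ℕ)^(m+1) = 4^(2*m+1) * 4 := by
      rw [show (16:ℕ) = 4^2 by norm_num, ← pow_mul]
      rw [show 2*(m+1) = (2*m+1)+1 by ring, pow_succ]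
    rw [h16] at this
    exact Nat.le_of_mul_le_mul_right this (by norm_num)


lemma choose_div_le (a : ℕ) (ha : 1 ≤ a) : (a.choose (a/2) : ℝ) / 2^a ≤ 1 / Real.sqrt a := by
  have hs : (0:ℝ) < Real.sqrt a := Real.sqrt_pos.2 (by exact_mod_cast ha)
  rw [div_le_div_iff₀ (by positivity) hs]
  have hsq : ((a.choose (a/2) : ℝ) * Real.sqrt a)^2 ≤ (1 * 2^a)^2 := by
    have h := choose_sq a
    have h' : ((a.choose (a/2) : ℝ))^2 * a ≤ 4^a := by exact_mod_cast h
    have hsqa : Real.sqrt a ^ 2 = a := Real.sq_sqrt (by positivity)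
    calc ((a.choose (a/2) : ℝ) * Real.sqrt a)^2 = ((a.choose (a/2) : ℝ))^2 * (Real.sqrt a ^2) := by ring
      _ = ((a.choose (a/2) : ℝ))^2 * a := by rw [hsqa]
      _ ≤ 4^a := h'
      _ = (1 * 2^a)^2 := by rw [one_mul, ← pow_mul, mul_comm a 2, pow_mul]; norm_num
  exact (abs_le_of_sq_le_sq' hsq (by positivity)).2


-- Step A: positive weights version via Sperner
lemma LO_pos {ι : Type*} [Fintype ι] [DecidableEq ι] (w : ι → ℝ) (α t : ℝ) (hα : 0 < α)
    (hw : ∀ i, α ≤ w i) [DecidablePred fun ε : ι → Bool => |(∑ i, if ε i then w i else -w i) - t| < α] :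
    (univ.filter fun ε : ι → Bool => |(∑ i, if ε i then w i else -w i) - t| < α).card ≤
      (Fintype.card ι).choose (Fintype.card ι / 2) := by
  classical
  set T : ℝ := ∑ i, w i with hT
  set c : ℝ := (t + T) / 2 with hc
  set 𝒜 : Finset (Finset ι) := univ.filter fun A : Finset ι => |∑ i ∈ A, w i - c| < α/2 with h𝒜
  have hanti : IsAntichain (· ⊆ ·) (𝒜 : Set (Finset ι)) := by
    intro A hA B hB hne hsub
    simp only [h𝒜, coe_filter, Set.mem_setOf_eq, mem_univ, true_and] at hA hB
    have hss : A ⊆ B := hsub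
    have hne' : (B \ A).Nonempty := by
      rw [Finset.sdiff_nonempty]
      intro h
      exact hne (Finset.Subset.antisymm hss h)
    have hdiff : ∑ i ∈ B, w i - ∑ i ∈ A, w i = ∑ i ∈ B \ A, w i := by
      rw [← Finset.sum_sdiff hss]; ring
    have hge : α ≤ ∑ i ∈ B \ A, w i := by
      obtain ⟨j, hj⟩ := hne'
      exact le_trans (hw j) (Finset.single_le_sum (fun i _ => le_trans hα.le (hw i)) hj)
    have : |∑ i ∈ B, w i - ∑ i ∈ A, w i| < α := by
      calc |∑ i ∈ B, w i - ∑ i ∈ A, w i| = |(∑ i ∈ B, w i - c) - (∑ i ∈ A, w i - c)| := by ring_nf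
        _ ≤ |∑ i ∈ B, w i - c| + |∑ i ∈ A, w i - c| := abs_sub _ _
        _ < α/2 + α/2 := add_lt_add hB hA
        _ = α := by ring
    rw [hdiff] at this
    exact absurd (lt_of_le_of_lt (le_abs_self _) this) (not_lt.2 hge)
  have hsperner := IsAntichain.sperner hanti
  refine le_trans ?_ hsperner
  apply Finset.card_le_card_of_injOn (fun ε => univ.filter fun i => ε i)
  · intro ε hε
    rw [h𝒜]
    simp only [coe_filter, Set.mem_setOf_eq, mem_filter, mem_univ, true_and] at hε ⊢
    have hsum : ∑ i, (if ε i then w i else -w i) = 2 * ∑ i ∈ univ.filter (fun i => ε i), w i - T := by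
      rw [hT, ← Finset.sum_filter_add_sum_filter_not univ (fun i => ε i) w]
      rw [← Finset.sum_filter_add_sum_filter_not univ (fun i => ε i) (fun i => if ε i then w i else -w i)]
      rw [Finset.sum_congr rfl (fun i hi => by simp [mem_filter] at hi; simp [hi] : ∀ i ∈ univ.filter (fun i => ε i), (if ε i then w i else -w i) = w i)]
      rw [Finset.sum_congr rfl (fun i hi => by simp [mem_filter] at hi; simp [hi] : ∀ i ∈ univ.filter (fun i => ¬ ε i), (if ε i then w i else -w i) = -w i)]
      rw [Finset.sum_neg_distrib]
      ring
    rw [hsum] at hε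
    have h2 : 2 * ∑ i ∈ univ.filter (fun i => ε i), w i - T - t
        = 2 * (∑ i ∈ univ.filter (fun i => ε i), w i - c) := by rw [hc]; ring
    rw [h2, abs_mul, abs_two] at hε
    linarith
  · intro ε₁ h₁ ε₂ h₂ heq
    funext i
    have := Finset.ext_iff.1 heq i
    simpa using this

lemma LO {ι : Type*} [Fintype ι] [DecidableEq ι] (w : ι → ℝ) (α t : ℝ) (hα : 0 < α)
    (hw : ∀ i, α ≤ |w i|) [DecidablePred fun ε : ι → Bool => |(∑ i, if ε i then w i else -w i) - t| < α] :
    (Finset.univ.filter fun ε : ι → Bool => |(∑ i, if ε i then w i else -w i) - t| < α).card ≤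
      (Fintype.card ι).choose (Fintype.card ι / 2) := by
  classical
  set m : (ι → Bool) → (ι → Bool) := fun ε i => xor (ε i) (decide (w i < 0)) with hm
  have hmm : ∀ ε, m (m ε) = ε := by
    intro ε; funext i; simp [hm, Bool.xor_assoc]
  have key : ∀ ε : ι → Bool,
      (∑ i, if m ε i then |w i| else -|w i|) = ∑ i, if ε i then w i else -w i := by
    intro ε
    apply Finset.sum_congr rfl
    intro i _
    by_cases h : w i < 0
    · have h2 := abs_of_neg h
      cases hε : ε i <;> simp [hm, hε, h, h2]
    · have h2 := abs_of_nonneg (not_lt.mp h)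
      cases hε : ε i <;> simp [hm, hε, h, h2]
  have hcard : (Finset.univ.filter fun ε : ι → Bool => |(∑ i, if ε i then w i else -w i) - t| < α).card
      = (Finset.univ.filter fun ε : ι → Bool => |(∑ i, if ε i then |w i| else -|w i|) - t| < α).card := by
    apply Finset.card_bij' (fun ε _ => m ε) (fun ε _ => m ε)
    · intro ε hε
      simp only [Finset.mem_filter, Finset.mem_univ, true_and] at hε ⊢
      rw [show (∑ i, if m ε i then |w i| else -|w i|) = ∑ i, if ε i then w i else -w i from key ε]
      exact hε
    · intro ε hε
      simp only [Finset.mem_filter, Finset.mem_univ, true_and] at hε ⊢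
      rw [← key (m ε), hmm]
      exact hε
    · intro ε _; exact hmm ε
    · intro ε _; exact hmm ε
  rw [hcard]
  exact LO_pos (fun i => |w i|) α t hα hw



lemma count_bound (n a : ℕ) (ha : 1 ≤ a) (han : a ≤ n) (v : Fin n → ℝ) (α t : ℝ) (hα : 0 < α)
    (hv : ∀ i : Fin n, (i:ℕ) < a → α ≤ |v i|) :
    (Finset.univ.filter fun ε : Fin n → Bool => |(∑ i, if ε i then v i else -v i) - t| < α).card
      ≤ 2^(n-a) * a.choose (a/2) := by
  classical
  set p : Fin n → Prop := fun i => (i:ℕ) < a with hp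
  have hcards : Fintype.card {i : Fin n // p i} = a := by
    refine Fintype.card_congr ?_ |>.trans (Fintype.card_fin a)
    exact {
      toFun := fun s => ⟨(s.1 : ℕ), s.2⟩
      invFun := fun j => ⟨⟨(j:ℕ), lt_of_lt_of_le j.2 han⟩, j.2⟩
      left_inv := fun s => by ext; simp
      right_inv := fun j => by ext; simp }
  have hcardc : Fintype.card {i : Fin n // ¬ p i} = n - a := by
    rw [Fintype.card_subtype_compl, hcards, Fintype.card_fin]
  set P : (Fin n → Bool) → Prop := fun ε => |(∑ i, if ε i then v i else -v i) - t| < α with hP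
  set e := Equiv.piEquivPiSubtypeProd p (fun _ => Bool) with he
  have h1 : (Finset.univ.filter P).card = Fintype.card {ε : Fin n → Bool // P ε} := by
    rw [Fintype.card_subtype]
  have e2 : {ε : Fin n → Bool // P ε} ≃
      Σ δ : ({i : Fin n // ¬ p i} → Bool), {η : ({i : Fin n // p i} → Bool) // P (e.symm (η, δ))} :=
    calc {ε : Fin n → Bool // P ε}
        ≃ {z : ({i : Fin n // p i} → Bool) × ({i : Fin n // ¬ p i} → Bool) // P (e.symm z)} :=
          Equiv.subtypeEquiv e (fun ε => by rw [Equiv.symm_apply_apply])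
      _ ≃ {y : ({i : Fin n // ¬ p i} → Bool) × ({i : Fin n // p i} → Bool) // P (e.symm (y.2, y.1))} :=
          Equiv.subtypeEquiv (Equiv.prodComm _ _) (fun z => by simp)
      _ ≃ Σ δ : ({i : Fin n // ¬ p i} → Bool), {η : ({i : Fin n // p i} → Bool) // P (e.symm (η, δ))} :=
          Equiv.subtypeProdEquivSigmaSubtype
            (fun (δ : {i : Fin n // ¬ p i} → Bool) (η : {i : Fin n // p i} → Bool) => P (e.symm (η, δ)))
  have hsplit : ∀ (η : {i : Fin n // p i} → Bool) (δ : {i : Fin n // ¬ p i} → Bool),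
      (∑ i, if e.symm (η, δ) i then v i else -v i)
        = (∑ i : {i : Fin n // p i}, if η i then v i.1 else -v i.1)
          + ∑ i : {i : Fin n // ¬ p i}, (if δ i then v i.1 else -v i.1) := by
    intro η δ
    rw [← Fintype.sum_subtype_add_sum_subtype p (fun i : Fin n => if e.symm (η, δ) i then v i else -v i)]
    congr 1
    · apply Finset.sum_congr rfl
      intro i _
      have : e.symm (η, δ) i.1 = η i := by
        simp [he, Equiv.piEquivPiSubtypeProd, i.2]
      rw [this]
    · apply Finset.sum_congr rfl
      intro i _
      have : e.symm (η, δ) i.1 = δ i := by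
        simp [he, Equiv.piEquivPiSubtypeProd, i.2]
      rw [this]
  have hPP : (Finset.univ.filter fun ε : Fin n → Bool => |(∑ i, if ε i then v i else -v i) - t| < α)
      = Finset.univ.filter P := Finset.filter_congr_decidable _ _ _
  rw [hPP, h1, Fintype.card_congr e2, Fintype.card_sigma]
  have hbound : ∀ δ : ({i : Fin n // ¬ p i} → Bool),
      Fintype.card {η : ({i : Fin n // p i} → Bool) // P (e.symm (η, δ))} ≤ a.choose (a/2) := by
    intro δ
    rw [Fintype.card_subtype]
    have : ∀ η : ({i : Fin n // p i} → Bool), P (e.symm (η, δ)) ↔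
        |(∑ i : {i : Fin n // p i}, if η i then v i.1 else -v i.1)
          - (t - ∑ i : {i : Fin n // ¬ p i}, (if δ i then v i.1 else -v i.1))| < α := by
      intro η
      rw [hP]
      simp only [hsplit η δ]
      constructor <;> intro h <;> (convert h using 2; ring)
    rw [Finset.filter_congr (fun η _ => by rw [this η])]
    have := LO (fun i : {i : Fin n // p i} => v i.1) α
      (t - ∑ i : {i : Fin n // ¬ p i}, (if δ i then v i.1 else -v i.1)) hα
      (fun i => hv i.1 i.2)
    rw [hcards] at this
    exact this
  calc ∑ δ : ({i : Fin n // ¬ p i} → Bool),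
        Fintype.card {η : ({i : Fin n // p i} → Bool) // P (e.symm (η, δ))}
      ≤ ∑ _δ : ({i : Fin n // ¬ p i} → Bool), a.choose (a/2) :=
        Finset.sum_le_sum fun δ _ => hbound δ
    _ = 2^(n-a) * a.choose (a/2) := by
        rw [Finset.sum_const, Finset.card_univ, Fintype.card_fun, Fintype.card_bool, hcardc,
          smul_eq_mul]



noncomputable def bcast (b : Bool) : ℝ := if b then 1 else -1

instance : IsFiniteMeasure ((2⁻¹ : ENNReal) • Measure.dirac (1 : ℝ)
    + (2⁻¹ : ENNReal) • Measure.dirac (-1 : ℝ)) := by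
  constructor
  simp [Measure.add_apply]

lemma uniformCube_eq (n : ℕ) :
    uniformCube n = ∑ ε : Fin n → Bool,
      (((2:ENNReal)⁻¹)^n • Measure.dirac (fun i => bcast (ε i))) := by
  rw [uniformCube]
  apply Measure.pi_eq
  intro s hs
  rw [Measure.finset_sum_apply]
  have hmeas : MeasurableSet (Set.pi Set.univ s) := MeasurableSet.univ_pi hs
  have hterm : ∀ ε : Fin n → Bool,
      (((2:ENNReal)⁻¹)^n • Measure.dirac (fun i => bcast (ε i))) (Set.pi Set.univ s)
        = ∏ i, (2:ENNReal)⁻¹ * (if bcast (ε i) ∈ s i then 1 else 0) := by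
    intro ε
    rw [Measure.smul_apply, Measure.dirac_apply' _ hmeas, smul_eq_mul]
    rw [Set.indicator_apply]
    rw [Set.mem_univ_pi]
    rw [Finset.prod_mul_distrib, Finset.prod_const]
    rw [Finset.prod_boole]
    simp only [Pi.one_apply, Finset.mem_univ, forall_true_left]
    congr 1
    simp
  simp_rw [hterm]
  rw [← Fintype.prod_sum (fun (i : Fin n) (b : Bool) => (2:ENNReal)⁻¹ * (if bcast b ∈ s i then 1 else 0))]
  apply Finset.prod_congr rfl
  intro i _
  rw [Measure.add_apply, Measure.smul_apply, Measure.smul_apply,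
    Measure.dirac_apply' _ (hs i), Measure.dirac_apply' _ (hs i)]
  simp only [Set.indicator_apply, smul_eq_mul, Pi.one_apply]
  rw [Fintype.sum_bool]
  simp [bcast]

lemma uniformCube_apply (n : ℕ) (S : Set (Fin n → ℝ)) (hS : MeasurableSet S) :
    uniformCube n S = ((2:ENNReal)⁻¹)^n *
      ((Finset.univ.filter fun ε : Fin n → Bool => (fun i => bcast (ε i)) ∈ S).card : ENNReal) := by
  rw [uniformCube_eq, Measure.finset_sum_apply]
  simp_rw [Measure.smul_apply, Measure.dirac_apply' _ hS, smul_eq_mul, Set.indicator_apply,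
    Pi.one_apply]
  rw [← Finset.mul_sum, Finset.sum_boole]


lemma main_bound (n a : ℕ) (ha : 1 ≤ a) (han : a ≤ n) (v : Fin n → ℝ) (α t : ℝ) (hα : 0 < α)
    (hv : ∀ i : Fin n, (i:ℕ) < a → α ≤ |v i|) :
    uniformCube n {x | |(∑ i, v i * x i) - t| < α} ≤
      ENNReal.ofReal ((a.choose (a / 2) : ℝ) / 2 ^ a) := by
  set S : Set (Fin n → ℝ) := {x | |(∑ i, v i * x i) - t| < α} with hSdef
  have hS : MeasurableSet S := by
    have hf : Measurable fun x : Fin n → ℝ => |(∑ i, v i * x i) - t| :=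
      (((Finset.measurable_sum Finset.univ fun i _ =>
        (measurable_pi_apply i : Measurable fun x : Fin n → ℝ => x i).const_mul (v i)).sub measurable_const)).abs
    exact measurableSet_lt hf measurable_const
  rw [uniformCube_apply n S hS]
  have hmem : ∀ ε : Fin n → Bool, ((fun i => bcast (ε i)) ∈ S) ↔
      |(∑ i, if ε i then v i else -v i) - t| < α := by
    intro ε
    rw [hSdef]
    simp only [Set.mem_setOf_eq]
    have : ∀ i, v i * bcast (ε i) = if ε i then v i else -v i := by
      intro i; cases h : ε i <;> simp [bcast, h]
    rw [Finset.sum_congr rfl fun i _ => this i]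
  have hcount := count_bound n a ha han v α t hα hv
  have hfil : (Finset.univ.filter fun ε : Fin n → Bool => (fun i => bcast (ε i)) ∈ S)
      = Finset.univ.filter fun ε : Fin n → Bool =>
          |(∑ i, if ε i then v i else -v i) - t| < α :=
    Finset.filter_congr fun ε _ => by rw [hmem ε]
  rw [hfil]
  have hle : ((Finset.univ.filter fun ε : Fin n → Bool =>
      |(∑ i, if ε i then v i else -v i) - t| < α).card : ENNReal) ≤
      ((2^(n-a) * a.choose (a/2) : ℕ) : ENNReal) := Nat.cast_le.2 hcount
  calc ((2:ENNReal)⁻¹)^n * ((Finset.univ.filter fun ε : Fin n → Bool =>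
        |(∑ i, if ε i then v i else -v i) - t| < α).card : ENNReal)
      ≤ ((2:ENNReal)⁻¹)^n * ((2^(n-a) * a.choose (a/2) : ℕ) : ENNReal) :=
        mul_le_mul_right hle _
    _ = ENNReal.ofReal ((a.choose (a / 2) : ℝ) / 2 ^ a) := by
        push_cast
        have hn : n = (n-a) + a := (Nat.sub_add_cancel han).symm
        have hcancel : ((2:ENNReal)⁻¹)^(n-a) * (2:ENNReal)^(n-a) = 1 := by
          rw [← mul_pow, ENNReal.inv_mul_cancel (by norm_num) (by norm_num), one_pow]
        have lhs_eq : ((2:ENNReal)⁻¹)^n * ((2:ENNReal)^(n-a) * (a.choose (a/2) : ENNReal))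
            = ((2:ENNReal)⁻¹)^a * (a.choose (a/2) : ENNReal) := by
          nth_rewrite 1 [hn]
          rw [pow_add]
          calc ((2:ENNReal)⁻¹)^(n-a) * ((2:ENNReal)⁻¹)^a * ((2:ENNReal)^(n-a) * (a.choose (a/2) : ENNReal))
              = (((2:ENNReal)⁻¹)^(n-a) * (2:ENNReal)^(n-a)) * (((2:ENNReal)⁻¹)^a * (a.choose (a/2) : ENNReal)) := by
                ring
            _ = ((2:ENNReal)⁻¹)^a * (a.choose (a/2) : ENNReal) := by rw [hcancel, one_mul]
        rw [lhs_eq]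
        rw [ENNReal.ofReal_div_of_pos (by positivity), ENNReal.ofReal_natCast,
          ENNReal.ofReal_pow (by norm_num), ENNReal.ofReal_ofNat,
          ENNReal.div_eq_inv_mul, ← ENNReal.inv_pow]

/-- if `|v i| ≥ α > 0` for all `i < a` and `x` is uniform on `{-1,1}^n`,
then for every `t`, `Pr[|⟨v,x⟩ - t| < α] ≤ binom(a, ⌊a/2⌋)/2^a`; in particular the Lévy
concentration function satisfies `Q(α, ⟨v,x⟩) ≤ binom(a, ⌊a/2⌋)/2^a = O(1/√a)`. -/
theorem stmt_10 :
    ∃ C : ℝ, 0 < C ∧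
      ∀ (n : ℕ), 1 ≤ n →
        ∀ (v : Fin n → ℝ) (α : ℝ), 0 < α →
          ∀ (a : ℕ), 1 ≤ a → a ≤ n →
            (∀ i : Fin n, (i : ℕ) < a → α ≤ |v i|) →
            (∀ t : ℝ,
              uniformCube n {x | |(∑ i, v i * x i) - t| < α} ≤
                ENNReal.ofReal ((a.choose (a / 2) : ℝ) / 2 ^ a)) ∧
            (⨆ t : ℝ, uniformCube n {x | |(∑ i, v i * x i) - t| < α}) ≤
                ENNReal.ofReal ((a.choose (a / 2) : ℝ) / 2 ^ a) ∧
            (a.choose (a / 2) : ℝ) / 2 ^ a ≤ C / Real.sqrt a := by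
  refine ⟨1, one_pos, fun n hn v α hα a ha han hv => ?_⟩
  refine ⟨fun t => main_bound n a ha han v α t hα hv,
    iSup_le fun t => main_bound n a ha han v α t hα hv, ?_⟩
  simpa using choose_div_le a ha
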